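/- arXiv:1809.00008 — 3 statements merged into one kernel-verified Lean document; each statement's English description precedes it below -/
import Mathlib

section
/- Let p be a prime and k ≥ 2. Let P be the linear code over Z_p of length p^{k-1} generated by the k×p^{k-1} matrix whose first row is the all-ones vector and whose remaining (k-1)×p^{k-1} submatrix B has as columns all distinct vectors of Z_p^{k-1}. Then P has exactly p^k codewords and its nonzero codewords have Hamming weight either (p-1)p^{k-2} or p^{k-1}. -/
open Finset

/-- Each fiber of a nonzero linear functional on `(ZMod p)^m` has `p^(m-1)` elements. -/
lemma fiber_card {p : ℕ} [NeZero p] (hp : p.Prime) {m : ℕ} (u : Fin m → ZMod p)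
    (i0 : Fin m) (hu : u i0 ≠ 0) (c : ZMod p) :
    (Finset.univ.filter fun w : Fin m → ZMod p => ∑ i, u i * w i = c).card = p ^ (m - 1) := by
  haveI : Fact p.Prime := ⟨hp⟩
  set e : Fin m → ZMod p := fun i => if i = i0 then (u i0)⁻¹ else 0 with he
  have hge : ∑ i, u i * e i = 1 := by
    rw [he, Finset.sum_eq_single i0]
    · simp [mul_inv_cancel₀ hu]
    · intro b _ hb; simp [hb]
    · simp
  have hlin : ∀ (a : ZMod p) (w : Fin m → ZMod p),
      ∑ i, u i * (w i + a * e i) = (∑ i, u i * w i) + a := by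
    intro a w
    simp only [mul_add, Finset.sum_add_distrib]
    congr 1
    calc ∑ i, u i * (a * e i) = a * ∑ i, u i * e i := by
          rw [Finset.mul_sum]; congr 1; ext i; ring
      _ = a := by rw [hge, mul_one]
  have hfib : ∀ c : ZMod p,
      (Finset.univ.filter fun w : Fin m → ZMod p => ∑ i, u i * w i = c).card =
      (Finset.univ.filter fun w : Fin m → ZMod p => ∑ i, u i * w i = 0).card := by
    intro c
    apply Finset.card_bij' (fun w _ => w - c • e) (fun w _ => w + c • e)
    · intro w hw
      simp only [Finset.mem_filter, Finset.mem_univ, true_and] at hw ⊢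
      have h1 : ∑ i, u i * ((w - c • e) i) = (∑ i, u i * w i) + (-c) := by
        have h2 := hlin (-c) w
        simpa [sub_eq_add_neg, neg_mul, mul_comm] using h2
      rw [h1, hw]; ring
    · intro w hw
      simp only [Finset.mem_filter, Finset.mem_univ, true_and] at hw ⊢
      have h1 : ∑ i, u i * ((w + c • e) i) = (∑ i, u i * w i) + c := by
        have h2 := hlin c w
        simpa [mul_comm] using h2
      rw [h1, hw]; ring
    · intro w _; ext i; simp
    · intro w _; ext i; simp
  set N := (Finset.univ.filter fun w : Fin m → ZMod p => ∑ i, u i * w i = 0).card with hN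
  clear_value N
  clear_value e
  have hpart : (Finset.univ : Finset (Fin m → ZMod p)).card =
      ∑ c : ZMod p, (Finset.univ.filter fun w : Fin m → ZMod p => ∑ i, u i * w i = c).card := by
    exact Finset.card_eq_sum_card_fiberwise fun w _ => Finset.mem_univ _
  have hm : 1 ≤ m := i0.pos
  have hps : p ^ m = p * p ^ (m - 1) := by
    conv_lhs => rw [show m = (m - 1) + 1 from (Nat.succ_pred_eq_of_pos hm).symm]
    rw [pow_succ]; ring
  have hpart2 : p ^ m = p * N := by
    calc p ^ m = (Finset.univ : Finset (Fin m → ZMod p)).card := by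
          rw [Finset.card_univ]; simp [ZMod.card]
      _ = ∑ c : ZMod p, (Finset.univ.filter fun w : Fin m → ZMod p => ∑ i, u i * w i = c).card :=
          hpart
      _ = ∑ _c : ZMod p, N := Finset.sum_congr rfl fun c _ => hfib c
      _ = p * N := by rw [Finset.sum_const, Finset.card_univ, ZMod.card, smul_eq_mul]
  have hNval : N = p ^ (m - 1) := by
    apply Nat.eq_of_mul_eq_mul_left hp.pos
    rw [← hpart2, hps]
  rw [hfib c, hNval]

/-- the two-weight code `P` generated by the matrix `A` (all-ones row on top of a
matrix `B` whose columns enumerate all vectors of `(ZMod p)^(k-1)`) has exactly `p^k` codewords,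
and every nonzero codeword has Hamming weight `(p-1)*p^(k-2)` or `p^(k-1)`. -/
theorem stmt0 (p k : ℕ) (hp : p.Prime) (hk : 2 ≤ k)
    (A : Fin k → Fin (p ^ (k - 1)) → ZMod p)
    (hrow0 : ∀ j, A ⟨0, by omega⟩ j = 1)
    (hB : Function.Bijective
      (fun (j : Fin (p ^ (k - 1))) => fun (i : Fin (k - 1)) => A ⟨i.val + 1, by omega⟩ j))
    (P : Submodule (ZMod p) (Fin (p ^ (k - 1)) → ZMod p))
    (hP : P = Submodule.span (ZMod p) (Set.range A)) :
    Nat.card P = p ^ k ∧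
      ∀ x ∈ P, x ≠ 0 →
        hammingNorm x = (p - 1) * p ^ (k - 2) ∨ hammingNorm x = p ^ (k - 1) := by
  haveI : Fact p.Prime := ⟨hp⟩
  haveI : NeZero p := ⟨hp.ne_zero⟩
  obtain ⟨m, rfl⟩ : ∃ m, k = m + 1 := ⟨k - 1, by omega⟩
  have hm : 1 ≤ m := by omega
  subst hP
  set F : Fin (p ^ m) → (Fin m → ZMod p) := fun j i => A i.succ j with hF
  have hFbij : Function.Bijective F := hB
  have hA0 : ∀ j, A 0 j = 1 := hrow0
  -- membership description
  have hmem : ∀ x, x ∈ Submodule.span (ZMod p) (Set.range A) ↔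
      ∃ v, Matrix.vecMul v A = x := by
    intro x
    rw [show Submodule.span (ZMod p) (Set.range A) = LinearMap.range (Matrix.vecMulLinear A) from
      (_root_.range_vecMulLinear A).symm]
    exact ⟨fun ⟨v, hv⟩ => ⟨v, hv⟩, fun ⟨v, hv⟩ => ⟨v, hv⟩⟩
  have hvm : ∀ (v : Fin (m+1) → ZMod p) (j : Fin (p ^ m)),
      Matrix.vecMul v A j = v 0 + ∑ i : Fin m, v i.succ * F j i := by
    intro v j
    change dotProduct v (fun i => A i j) = _
    rw [dotProduct, Fin.sum_univ_succ, hA0 j, mul_one]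
  -- injectivity
  have hinj : Function.Injective (Matrix.vecMulLinear A) := by
    rw [← LinearMap.ker_eq_bot, LinearMap.ker_eq_bot']
    intro v hv
    have hkey : ∀ w : Fin m → ZMod p, v 0 + ∑ i : Fin m, v i.succ * w i = 0 := by
      intro w
      obtain ⟨j, hj⟩ := hFbij.2 w
      have := congrFun hv j
      change Matrix.vecMul v A j = (0 : Fin (p ^ m) → ZMod p) j at this
      rw [← hj]
      rw [hvm v j] at this
      exact this
    have h0 : v 0 = 0 := by simpa using hkey 0
    have hs : ∀ i : Fin m, v i.succ = 0 := by
      intro i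
      have := hkey (Pi.single i 1)
      rw [Finset.sum_eq_single i] at this
      · simpa [h0] using this
      · intro b _ hb; simp [Pi.single_apply, hb]
      · simp
    funext i
    induction i using Fin.cases with
    | zero => exact h0
    | succ i => exact hs i
  constructor
  · -- cardinality
    rw [show Submodule.span (ZMod p) (Set.range A) = LinearMap.range (Matrix.vecMulLinear A) from
      (_root_.range_vecMulLinear A).symm]
    have e := LinearEquiv.ofInjective (Matrix.vecMulLinear A) hinj
    rw [← Nat.card_congr e.toEquiv]
    simp [Nat.card_eq_fintype_card, ZMod.card]
  · intro x hx hx0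
    obtain ⟨v, hv⟩ := (hmem x).1 hx
    have hxj : ∀ j, x j = v 0 + ∑ i : Fin m, v i.succ * F j i := by
      intro j; rw [← hv]; exact hvm v j
    by_cases hvs : ∀ i : Fin m, v i.succ = 0
    · right
      have hv0 : v 0 ≠ 0 := by
        intro h0
        apply hx0
        funext j
        rw [hxj j, h0]
        simp [hvs]
      have : ∀ j, x j ≠ 0 := by
        intro j
        rw [hxj j]
        simpa [hvs] using hv0
      rw [hammingNorm]
      rw [Finset.filter_true_of_mem (fun j _ => this j)]
      simp [Finset.card_univ, ZMod.card]
    · left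
      push_neg at hvs
      obtain ⟨i0, hi0⟩ := hvs
      set u : Fin m → ZMod p := fun i => v i.succ with hu
      -- transport count along F
      have hcard2 : (Finset.univ.filter fun j => x j ≠ 0).card =
          (Finset.univ.filter fun w : Fin m → ZMod p => v 0 + ∑ i, u i * w i ≠ 0).card := by
        apply Finset.card_bij (fun j _ => F j)
        · intro j hj
          simp only [Finset.mem_filter, Finset.mem_univ, true_and] at hj ⊢
          rw [hxj j] at hj
          exact hj
        · intro j1 _ j2 _ h
          exact hFbij.1 h
        · intro w hw
          obtain ⟨j, hj⟩ := hFbij.2 w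
          refine ⟨j, ?_, hj⟩
          simp only [Finset.mem_filter, Finset.mem_univ, true_and] at hw ⊢
          rw [hxj j, hj]
          exact hw
      have hfc := fiber_card (p := p) hp u i0 hi0 (-(v 0))
      have hsplit := Finset.card_filter_add_card_filter_not
        (s := (Finset.univ : Finset (Fin m → ZMod p)))
        (p := fun w => ∑ i, u i * w i = -(v 0))
      have hcu : (Finset.univ : Finset (Fin m → ZMod p)).card = p ^ m := by
        simp [Finset.card_univ, ZMod.card]
      have hiff : ∀ w : Fin m → ZMod p,
          (v 0 + ∑ i, u i * w i ≠ 0) ↔ ¬(∑ i, u i * w i = -(v 0)) := by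
        intro w
        constructor
        · intro h h'; exact h (by rw [h']; ring)
        · intro h h'; exact h (by linear_combination h')
      rw [hammingNorm, hcard2]
      rw [Finset.filter_congr (fun w _ => by rw [hiff w])]
      clear_value F u
      have hps : p ^ m = p * p ^ (m - 1) := by
        conv_lhs => rw [show m = (m - 1) + 1 from (Nat.succ_pred_eq_of_pos hm).symm]
        rw [pow_succ]; ring
      have hgoal : (p - 1) * p ^ (m + 1 - 2) = p ^ m - p ^ (m - 1) := by
        have h2 : m + 1 - 2 = m - 1 := rfl
        rw [h2, Nat.sub_mul, one_mul, hps]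
      rw [hgoal]
      rw [hfc, hcu] at hsplit
      exact (Nat.sub_eq_of_eq_add (by rw [← hsplit]; ring)).symm
end

section
/- Let C be a linear code over Z_p with minimum distance d, and let s be the number of distinct nonzero Hamming weights occurring in the dual code C^⊥. If 2s − 1 ≤ d ≤ 2s + 1, then the weight distribution of any coset of C is determined by the minimum weight of that coset. -/
/-- The dual of a linear code `C ⊆ R^n` under the standard inner product. -/
def dualCode {R : Type*} [CommRing R] {n : ℕ} (C : Submodule R (Fin n → R)) :
    Submodule R (Fin n → R) where
  carrier := {x | ∀ c ∈ C, ∑ j, x j * c j = 0}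
  add_mem' := by
    intro a b ha hb c hc
    simp only [Pi.add_apply, add_mul, Finset.sum_add_distrib, ha c hc, hb c hc, add_zero]
  zero_mem' := by intro c hc; simp
  smul_mem' := by
    intro r a ha c hc
    simp only [Pi.smul_apply, smul_eq_mul, mul_assoc, ← Finset.mul_sum, ha c hc, mul_zero]

open Polynomial Finset
open scoped Classical

namespace DelsarteAux

variable {p : ℕ} [NeZero p]

lemma sum_psi (ψ : AddChar (ZMod p) ℂ) (hψ : ψ ≠ 0) : ∑ a : ZMod p, ψ a = 0 :=
  AddChar.sum_eq_zero_iff_ne_zero.mpr hψ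

lemma psi_ne_one (ψ : AddChar (ZMod p) ℂ) (hψ : ψ ≠ 0) : ∃ b : ZMod p, ψ b ≠ 1 := by
  by_contra h
  push_neg at h
  exact hψ (by ext a; simp [h a])

lemma sum_mul_psi [Fact p.Prime] (ψ : AddChar (ZMod p) ℂ) (hψ : ψ ≠ 0) {b : ZMod p} (hb : b ≠ 0) :
    ∑ a : ZMod p, ψ (a * b) = 0 := by
  rw [← sum_psi ψ hψ]
  exact Fintype.sum_bijective (fun a => a * b) (mulRight_bijective₀ b hb) _ _ (fun a => rfl)

/-- ψ composed with a nonzero scalar hits a non-one value -/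
lemma exists_psi_mul_ne_one [Fact p.Prime] (ψ : AddChar (ZMod p) ℂ) (hψ : ψ ≠ 0)
    {q : ZMod p} (hq : q ≠ 0) : ∃ k : ZMod p, ψ (k * q) ≠ 1 := by
  obtain ⟨b, hb⟩ := psi_ne_one ψ hψ
  exact ⟨b * q⁻¹, by rwa [mul_assoc, inv_mul_cancel₀ hq, mul_one]⟩

end DelsarteAux

namespace DelsarteAux2
open DelsarteAux

set_option linter.unusedSectionVars false

variable {p n : ℕ} [NeZero p] [Fact p.Prime]
  (ψ : AddChar (ZMod p) ℂ)
  (C : Submodule (ZMod p) (Fin n → ZMod p))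

/-- inner product linear in second argument, as AddMonoidHom from the subtype -/
noncomputable def ipHom (v : Fin n → ZMod p) : C →+ ZMod p where
  toFun c := ∑ j, v j * (c : Fin n → ZMod p) j
  map_zero' := by simp
  map_add' a b := by
    simp [mul_add, Finset.sum_add_distrib]

lemma mem_dual_iff (v : Fin n → ZMod p) :
    v ∈ dualCode C ↔ ∀ c ∈ C, ∑ j, v j * c j = 0 := Iff.rfl

lemma code_sum (hψ : ψ ≠ 0) (v : Fin n → ZMod p) :
    ∑ c : C, ψ (∑ j, v j * (c : Fin n → ZMod p) j)
      = if v ∈ dualCode C then (Nat.card C : ℂ) else 0 := by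
  split_ifs with h
  · rw [Nat.card_eq_fintype_card]
    have : ∀ c : C, ψ (∑ j, v j * (c : Fin n → ZMod p) j) = 1 := by
      intro c
      rw [h c c.2, ψ.map_zero_eq_one]
    simp [this]
  · -- nontrivial character on C
    have hne : ∃ c0 : C, ψ (∑ j, v j * (c0 : Fin n → ZMod p) j) ≠ 1 := by
      rw [mem_dual_iff] at h
      push_neg at h
      obtain ⟨c, hc, hq⟩ := h
      obtain ⟨k, hk⟩ := exists_psi_mul_ne_one ψ hψ hq
      refine ⟨⟨k • c, C.smul_mem k hc⟩, ?_⟩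
      have : ∑ j, v j * (k • c) j = k * ∑ j, v j * c j := by
        rw [Finset.mul_sum]
        exact Finset.sum_congr rfl fun j _ => by simp [Pi.smul_apply, smul_eq_mul]; ring
      rwa [this]
    set χ : AddChar C ℂ := ψ.compAddMonoidHom (ipHom C v) with hχ
    have hχne : χ ≠ 0 := by
      rw [AddChar.ne_zero_iff]
      obtain ⟨c0, hc0⟩ := hne
      exact ⟨c0, hc0⟩
    have := AddChar.sum_eq_zero_iff_ne_zero.mpr hχne
    simpa [hχ, AddChar.compAddMonoidHom_apply, ipHom] using this

end DelsarteAux2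

namespace DelsarteAux2b
open DelsarteAux
set_option linter.unusedSectionVars false

variable {p n : ℕ} [NeZero p] [Fact p.Prime] (ψ : AddChar (ZMod p) ℂ)

lemma psi_sum {ι : Type*} (s : Finset ι) (f : ι → ZMod p) :
    ψ (∑ i ∈ s, f i) = ∏ i ∈ s, ψ (f i) := by
  induction s using Finset.cons_induction with
  | empty => simp [ψ.map_zero_eq_one]
  | cons a s ha ih => rw [Finset.sum_cons, Finset.prod_cons, ψ.map_add_eq_mul, ih]

lemma orth (hψ : ψ ≠ 0) (w : Fin n → ZMod p) :
    ∑ v : Fin n → ZMod p, ψ (∑ j, v j * w j) = if w = 0 then ((p:ℂ)^n) else 0 := by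
  have key : ∑ v : Fin n → ZMod p, ψ (∑ j, v j * w j)
      = ∏ j, ∑ a : ZMod p, ψ (a * w j) := by
    rw [Fintype.prod_sum]
    exact Finset.sum_congr rfl fun v _ => psi_sum ψ _ _
  rw [key]
  split_ifs with h
  · subst h
    have : ∀ j : Fin n, ∑ a : ZMod p, ψ (a * (0:Fin n → ZMod p) j) = (p : ℂ) := by
      intro j
      simp [ψ.map_zero_eq_one, Finset.card_univ, ZMod.card]
    rw [Finset.prod_congr rfl fun j _ => this j, Finset.prod_const, Finset.card_univ,
      Fintype.card_fin]
  · obtain ⟨j, hj⟩ : ∃ j, w j ≠ 0 := by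
      by_contra hc; push_neg at hc; exact h (funext hc)
    exact Finset.prod_eq_zero (Finset.mem_univ j) (sum_mul_psi ψ hψ hj)

lemma single_sum (hψ : ψ ≠ 0) (z : ℂ) (b : ZMod p) :
    ∑ a : ZMod p, (if a ≠ 0 then z else 1) * ψ (a * b)
      = if b = 0 then 1 + ((p:ℂ)-1)*z else 1 - z := by
  rw [← Finset.add_sum_erase _ _ (Finset.mem_univ (0:ZMod p))]
  have herase : ∀ a ∈ Finset.univ.erase (0:ZMod p),
      (if a ≠ 0 then z else (1:ℂ)) * ψ (a * b) = z * ψ (a * b) := by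
    intro a ha
    rw [if_pos (Finset.mem_erase.mp ha).1]
  rw [Finset.sum_congr rfl herase, ← Finset.mul_sum]
  have hsplit : ∑ a ∈ Finset.univ.erase (0:ZMod p), ψ (a * b)
      = (∑ a : ZMod p, ψ (a * b)) - 1 := by
    rw [Finset.sum_erase_eq_sub (Finset.mem_univ (0:ZMod p)), zero_mul,
      ψ.map_zero_eq_one]
  rw [hsplit]
  simp only [ne_eq, not_true_eq_false, if_false, zero_mul, ψ.map_zero_eq_one, mul_one]
  by_cases hb : b = 0
  · subst hb
    rw [if_pos rfl]
    have : ∑ a : ZMod p, ψ (a * 0) = (p : ℂ) := by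
      simp [ψ.map_zero_eq_one, Finset.card_univ, ZMod.card]
    rw [this]; ring
  · rw [if_neg hb, sum_mul_psi ψ hψ hb]; ring

lemma hammingNorm_filter (v : Fin n → ZMod p) :
    (Finset.univ.filter fun j => ¬ v j = 0).card = hammingNorm v := rfl

lemma hammingNorm_card_compl (v : Fin n → ZMod p) :
    (Finset.univ.filter fun j => v j = 0).card = n - hammingNorm v := by
  have := Finset.card_filter_add_card_filter_not (s := (Finset.univ : Finset (Fin n)))
    (p := fun j => v j = 0)
  simp only [Finset.card_univ, Fintype.card_fin] at this
  have hn := hammingNorm_filter v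
  omega

lemma prod_formula (hψ : ψ ≠ 0) (v : Fin n → ZMod p) (z : ℂ) :
    ∑ u : Fin n → ZMod p, z ^ (hammingNorm u) * ψ (∑ j, u j * v j)
      = (1 - z) ^ (hammingNorm v) * (1 + ((p:ℂ)-1)*z) ^ (n - hammingNorm v) := by
  have hz : ∀ u : Fin n → ZMod p, (z : ℂ) ^ (hammingNorm u)
      = ∏ j, (if u j ≠ 0 then z else 1) := by
    intro u
    rw [Finset.prod_ite, Finset.prod_const, Finset.prod_const_one, mul_one]
    rfl
  have key : ∑ u : Fin n → ZMod p, z ^ (hammingNorm u) * ψ (∑ j, u j * v j)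
      = ∏ j, ∑ a : ZMod p, (if a ≠ 0 then z else 1) * ψ (a * v j) := by
    rw [Fintype.prod_sum]
    refine Finset.sum_congr rfl fun u _ => ?_
    rw [hz u, psi_sum ψ, ← Finset.prod_mul_distrib]
  rw [key, Finset.prod_congr rfl fun j _ => single_sum ψ hψ z (v j)]
  rw [Finset.prod_ite, Finset.prod_const, Finset.prod_const, hammingNorm_card_compl,
    hammingNorm_filter, mul_comm]

lemma hammingNorm_neg (v : Fin n → ZMod p) : hammingNorm (-v) = hammingNorm v := by
  simp [hammingNorm, neg_eq_zero]

variable (C : Submodule (ZMod p) (Fin n → ZMod p))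

lemma coset_sum (hψ : ψ ≠ 0) (v x : Fin n → ZMod p) :
    ∑ c : C, ψ (∑ j, v j * (x + (c : Fin n → ZMod p)) j)
      = if v ∈ dualCode C then ψ (∑ j, v j * x j) * (Nat.card C : ℂ) else 0 := by
  have hsplit : ∀ c : C, ψ (∑ j, v j * (x + (c : Fin n → ZMod p)) j)
      = ψ (∑ j, v j * x j) * ψ (∑ j, v j * (c : Fin n → ZMod p) j) := by
    intro c
    rw [← ψ.map_add_eq_mul, ← Finset.sum_add_distrib]
    congr 1
    exact Finset.sum_congr rfl fun j _ => by simp [Pi.add_apply, mul_add]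
  rw [Finset.sum_congr rfl fun c _ => hsplit c, ← Finset.mul_sum,
    DelsarteAux2.code_sum ψ C hψ v]
  split_ifs with h
  · rfl
  · rw [mul_zero]

/-- The master identity. -/
lemma master (hψ : ψ ≠ 0) (x : Fin n → ZMod p) (z : ℂ) :
    (p:ℂ)^n * ∑ c : C, z ^ hammingNorm (x + (c : Fin n → ZMod p))
      = (Nat.card C : ℂ) * ∑ v ∈ (dualCode C : Set (Fin n → ZMod p)).toFinite.toFinset,
          ψ (∑ j, v j * x j) *
            ((1-z) ^ hammingNorm v * (1 + ((p:ℂ)-1)*z) ^ (n - hammingNorm v)) := by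
  have key : ∑ v : Fin n → ZMod p,
      (∑ c : C, ψ (∑ j, v j * (x + (c : Fin n → ZMod p)) j)) *
        (∑ u : Fin n → ZMod p, z ^ hammingNorm u * ψ (∑ j, (-v) j * u j))
      = (p:ℂ)^n * ∑ c : C, z ^ hammingNorm (x + (c : Fin n → ZMod p)) := by
    have hchar : ∀ (v : Fin n → ZMod p) (c : C) (u : Fin n → ZMod p),
        ψ (∑ j, v j * (x + (c : Fin n → ZMod p)) j) * ψ (∑ j, (-v) j * u j)
          = ψ (∑ j, v j * (x + (c : Fin n → ZMod p) - u) j) := by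
      intro v c u
      rw [← ψ.map_add_eq_mul, ← Finset.sum_add_distrib]
      congr 1
      exact Finset.sum_congr rfl fun j _ => by simp; ring
    calc ∑ v : Fin n → ZMod p,
        (∑ c : C, ψ (∑ j, v j * (x + (c : Fin n → ZMod p)) j)) *
          (∑ u : Fin n → ZMod p, z ^ hammingNorm u * ψ (∑ j, (-v) j * u j))
        = ∑ v : Fin n → ZMod p, ∑ c : C, ∑ u : Fin n → ZMod p,
            z ^ hammingNorm u * ψ (∑ j, v j * (x + (c : Fin n → ZMod p) - u) j) := by
          refine Finset.sum_congr rfl fun v _ => ?_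
          rw [Finset.sum_mul_sum]
          refine Finset.sum_congr rfl fun c _ => Finset.sum_congr rfl fun u _ => ?_
          rw [← hchar v c u]; ring
      _ = ∑ c : C, ∑ u : Fin n → ZMod p, z ^ hammingNorm u *
            ∑ v : Fin n → ZMod p, ψ (∑ j, v j * (x + (c : Fin n → ZMod p) - u) j) := by
          rw [Finset.sum_comm]
          refine Finset.sum_congr rfl fun c _ => ?_
          rw [Finset.sum_comm]
          refine Finset.sum_congr rfl fun u _ => ?_
          rw [Finset.mul_sum]
      _ = ∑ c : C, ∑ u : Fin n → ZMod p, z ^ hammingNorm u *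
            (if x + (c : Fin n → ZMod p) - u = 0 then (p:ℂ)^n else 0) := by
          refine Finset.sum_congr rfl fun c _ => Finset.sum_congr rfl fun u _ => ?_
          rw [orth ψ hψ]
      _ = ∑ c : C, z ^ hammingNorm (x + (c : Fin n → ZMod p)) * (p:ℂ)^n := by
          refine Finset.sum_congr rfl fun c _ => ?_
          rw [Finset.sum_eq_single (x + (c : Fin n → ZMod p))]
          · rw [if_pos (sub_self _)]
          · intro u _ hu
            rw [if_neg, mul_zero]
            intro hz0
            exact hu (sub_eq_zero.mp hz0).symm
          · intro h; exact absurd (Finset.mem_univ _) h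
      _ = (p:ℂ)^n * ∑ c : C, z ^ hammingNorm (x + (c : Fin n → ZMod p)) := by
          rw [Finset.mul_sum]
          exact Finset.sum_congr rfl fun c _ => mul_comm _ _
  rw [← key]
  have hv : ∀ v : Fin n → ZMod p,
      (∑ c : C, ψ (∑ j, v j * (x + (c : Fin n → ZMod p)) j)) *
        (∑ u : Fin n → ZMod p, z ^ hammingNorm u * ψ (∑ j, (-v) j * u j))
      = if v ∈ dualCode C then (Nat.card C : ℂ) *
          (ψ (∑ j, v j * x j) *
            ((1-z) ^ hammingNorm v * (1 + ((p:ℂ)-1)*z) ^ (n - hammingNorm v))) else 0 := by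
    intro v
    rw [coset_sum ψ C hψ v x]
    have hT : ∑ u : Fin n → ZMod p, z ^ hammingNorm u * ψ (∑ j, (-v) j * u j)
        = (1-z) ^ hammingNorm v * (1 + ((p:ℂ)-1)*z) ^ (n - hammingNorm v) := by
      have := prod_formula ψ hψ (-v) z
      rw [hammingNorm_neg] at this
      rw [← this]
      refine Finset.sum_congr rfl fun u _ => ?_
      congr 2
      exact Finset.sum_congr rfl fun j _ => mul_comm _ _
    rw [hT]
    split_ifs
    · ring
    · rw [zero_mul]
  rw [Finset.sum_congr rfl fun v _ => hv v, Finset.sum_ite, Finset.sum_const_zero, add_zero]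
  have hDF : Finset.univ.filter (fun v => v ∈ dualCode C)
      = (dualCode C : Set (Fin n → ZMod p)).toFinite.toFinset := by
    ext v
    simp only [Finset.mem_filter, Finset.mem_univ, true_and, Set.Finite.mem_toFinset,
      SetLike.mem_coe]
  rw [hDF, Finset.mul_sum]

end DelsarteAux2b

namespace PolyAux

/-- A polynomial with at most `k` nonzero terms divisible by `(1-X)^k` is zero. -/
lemma eq_zero_of_card_support_le : ∀ (k : ℕ) (F : ℂ[X]),
    F.support.card ≤ k → ((1:ℂ[X]) - X)^k ∣ F → F = 0 := by
  intro k
  induction k with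
  | zero =>
    intro F hcard _
    rw [Nat.le_zero, Finset.card_eq_zero, Polynomial.support_eq_empty] at hcard
    exact hcard
  | succ k ih =>
    intro F hcard hdvd
    by_cases hF : F = 0
    · exact hF
    obtain ⟨j0, hj0⟩ := Polynomial.support_nonempty.mpr hF
    obtain ⟨G, hG⟩ := hdvd
    set F₁ : ℂ[X] := X * derivative F - Polynomial.C (j0:ℂ) * F with hF₁
    have hc : ∀ m, F₁.coeff m = F.coeff m * ((m : ℂ) - (j0 : ℂ)) := by
      intro m
      rw [hF₁, Polynomial.coeff_sub, Polynomial.coeff_C_mul]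
      cases m with
      | zero => simp [mul_comm]
      | succ m =>
        rw [Polynomial.coeff_X_mul, Polynomial.coeff_derivative]
        push_cast
        ring
    have hsupp : F₁.support ⊆ F.support.erase j0 := by
      intro m hm
      rw [Polynomial.mem_support_iff, hc m] at hm
      rw [Finset.mem_erase, Polynomial.mem_support_iff]
      constructor
      · rintro rfl
        simp at hm
      · intro h; exact hm (by rw [h, zero_mul])
    have hcard₁ : F₁.support.card ≤ k := by
      have := Finset.card_le_card hsupp
      have := Finset.card_erase_of_mem hj0
      omega
    have hdvd' : ((1:ℂ[X]) - X)^(k+1) ∣ F := ⟨G, hG⟩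
    have hdvd₁ : ((1:ℂ[X]) - X)^k ∣ F₁ := by
      have hdF : ((1:ℂ[X]) - X)^k ∣ derivative F := by
        rw [hG, Polynomial.derivative_mul, Polynomial.derivative_pow, Nat.add_sub_cancel]
        refine dvd_add (Dvd.dvd.mul_right (Dvd.dvd.mul_right (dvd_mul_left _ _) _) _) ?_
        exact Dvd.dvd.mul_right (pow_dvd_pow _ (Nat.le_succ k)) _
      have hdF2 : ((1:ℂ[X]) - X)^k ∣ F :=
        dvd_trans (pow_dvd_pow _ (Nat.le_succ k)) hdvd'
      exact dvd_sub (hdF.mul_left X) (hdF2.mul_left _)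
    have hF₁0 := ih F₁ hcard₁ hdvd₁
    -- so support F ⊆ {j0}
    have hsuppF : F.support = {j0} := by
      apply Finset.Subset.antisymm
      · intro m hm
        rw [Finset.mem_singleton]
        by_contra hmj
        have : F₁.coeff m = 0 := by rw [hF₁0]; simp
        rw [hc m] at this
        rcases mul_eq_zero.mp this with h | h
        · exact (Polynomial.mem_support_iff.mp hm) h
        · have : (m : ℂ) = (j0 : ℂ) := by linear_combination h
          exact hmj (Nat.cast_injective this)
      · intro m hm
        rw [Finset.mem_singleton] at hm
        subst hm
        exact hj0
    -- eval at 1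
    have heval : F.eval 1 = 0 := by
      rw [hG]
      simp
    rw [Polynomial.eval_eq_sum, Polynomial.sum_def, hsuppF, Finset.sum_singleton,
      one_pow, mul_one] at heval
    exact absurd heval (Polynomial.mem_support_iff.mp hj0)

lemma deg_one_sub : ((1:ℂ[X]) - X).natDegree ≤ 1 := by
  apply le_trans (Polynomial.natDegree_sub_le _ _)
  simp

lemma deg_one_add (a : ℂ) : ((1:ℂ[X]) + Polynomial.C a * X).natDegree ≤ 1 := by
  apply le_trans (Polynomial.natDegree_add_le _ _)
  simp [Polynomial.natDegree_C_mul_le]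
  exact le_trans (Polynomial.natDegree_C_mul_le _ _) (by simp)

lemma sub_lemma (p n s : ℕ) (hp : 1 < p) (hsn : s ≤ n) (δ : ℕ → ℂ)
    (hdvd : (X:ℂ[X])^s ∣ ∑ j ∈ range (n+1),
      Polynomial.C (δ j) * ((1 - X)^j * (1 + Polynomial.C ((p:ℂ)-1) * X)^(n-j))) :
    ((1:ℂ[X]) - X)^s ∣ ∑ j ∈ range (n+1), Polynomial.C (δ j) * X^j := by
  set Q : ℂ[X] := ∑ j ∈ range (n+1),
      Polynomial.C (δ j) * ((1 - X)^j * (1 + Polynomial.C ((p:ℂ)-1) * X)^(n-j)) with hQ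
  obtain ⟨R, hR⟩ := hdvd
  have hp1 : ((p:ℂ) - 1) ≠ 0 := by
    intro h
    have h2 : (p:ℂ) = 1 := by linear_combination h
    have h3 : p = 1 := by exact_mod_cast h2
    omega
  have hpC : (p:ℂ) ≠ 0 := by
    simp only [ne_eq, Nat.cast_eq_zero]; omega
  -- degree bounds
  have hdegQ : Q.natDegree ≤ n := by
    rw [hQ]
    apply le_trans (Polynomial.natDegree_sum_le _ _)
    rw [Finset.fold_max_le]
    refine ⟨Nat.zero_le n, fun j hj => ?_⟩
    rw [Finset.mem_range] at hj
    apply le_trans (Polynomial.natDegree_mul_le)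
    rw [Polynomial.natDegree_C, zero_add]
    apply le_trans (Polynomial.natDegree_mul_le)
    have h1 : (((1:ℂ[X]) - X)^j).natDegree ≤ j := by
      refine le_trans (Polynomial.natDegree_pow_le) ?_
      have := deg_one_sub
      nlinarith
    have h2 : ((((1:ℂ[X]) + Polynomial.C ((p:ℂ)-1) * X))^(n-j)).natDegree ≤ n - j := by
      refine le_trans (Polynomial.natDegree_pow_le) ?_
      have := deg_one_add ((p:ℂ)-1)
      nlinarith
    omega
  have hdegR : R.natDegree ≤ n - s := by
    by_cases hR0 : R = 0
    · simp [hR0]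
    have : Q.natDegree = s + R.natDegree := by
      rw [hR, Polynomial.natDegree_mul (pow_ne_zero s Polynomial.X_ne_zero) hR0, Polynomial.natDegree_pow,
        Polynomial.natDegree_X, mul_one]
    omega
  set H : ℂ[X] := ∑ k ∈ range (n-s+1),
      Polynomial.C (R.coeff k) * ((1 - X)^k * (1 + Polynomial.C ((p:ℂ)-1) * X)^(n-s-k)) with hH
  have key : Polynomial.C ((p:ℂ)^n) * (∑ j ∈ range (n+1), Polynomial.C (δ j) * X^j)
      = (1 - X)^s * H := by
    apply Polynomial.eq_of_infinite_eval_eq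
    have hfin : ({u : ℂ | (1:ℂ) + ((p:ℂ)-1) * u = 0}).Finite := by
      apply Set.Finite.subset (Set.finite_singleton (-(1/((p:ℂ)-1))))
      intro u hu
      simp only [Set.mem_setOf_eq] at hu
      simp only [Set.mem_singleton_iff]
      field_simp
      linear_combination hu
    have hinf : ({u : ℂ | (1:ℂ) + ((p:ℂ)-1) * u ≠ 0}).Infinite := by
      have h2 := hfin.infinite_compl
      convert h2 using 1
      rfl
    apply hinf.mono
    intro u hu
    simp only [Set.mem_setOf_eq] at hu ⊢
    set β : ℂ := 1 + ((p:ℂ)-1) * u with hβdef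
    set z : ℂ := (1 - u)/β with hzdef
    have h1z : β * (1 - z) = (p:ℂ) * u := by
      rw [hzdef]; field_simp; ring
    have h2z : β * (1 + ((p:ℂ)-1) * z) = (p:ℂ) := by
      rw [hzdef]; field_simp; ring
    have hβz : β * z = 1 - u := by
      rw [hzdef]; field_simp
    have E1 : β^n * Q.eval z = (p:ℂ)^n * ∑ j ∈ range (n+1), δ j * u^j := by
      rw [hQ, Polynomial.eval_finset_sum, Finset.mul_sum, Finset.mul_sum]
      refine Finset.sum_congr rfl fun j hj => ?_
      rw [Finset.mem_range] at hj
      have hsplit : β^n = β^j * β^(n-j) := by rw [← pow_add]; congr 1; omega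
      have hpj : (p:ℂ)^j * (p:ℂ)^(n-j) = (p:ℂ)^n := by rw [← pow_add]; congr 1; omega
      simp only [Polynomial.eval_mul, Polynomial.eval_pow, Polynomial.eval_add,
        Polynomial.eval_sub, Polynomial.eval_one, Polynomial.eval_X, Polynomial.eval_C]
      calc β^n * (δ j * ((1-z)^j * (1 + ((p:ℂ)-1)*z)^(n-j)))
          = δ j * ((β*(1-z))^j * (β*(1 + ((p:ℂ)-1)*z))^(n-j)) := by
            rw [hsplit, mul_pow, mul_pow]; ring
        _ = δ j * (((p:ℂ)*u)^j * ((p:ℂ))^(n-j)) := by rw [h1z, h2z]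
        _ = (p:ℂ)^n * (δ j * u^j) := by rw [mul_pow, ← hpj]; ring
    have E2 : β^n * Q.eval z = (1-u)^s * H.eval u := by
      rw [hR, Polynomial.eval_mul, Polynomial.eval_pow, Polynomial.eval_X,
        Polynomial.eval_eq_sum_range' (lt_of_le_of_lt hdegR (Nat.lt_succ_self _)) z,
        hH, Polynomial.eval_finset_sum]
      rw [Finset.mul_sum, Finset.mul_sum, Finset.mul_sum]
      refine Finset.sum_congr rfl fun k hk => ?_
      rw [Finset.mem_range] at hk
      have hsplit : β^n = β^(n-s-k) * β^(s+k) := by rw [← pow_add]; congr 1; omega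
      simp only [Polynomial.eval_mul, Polynomial.eval_pow, Polynomial.eval_add,
        Polynomial.eval_sub, Polynomial.eval_one, Polynomial.eval_X, Polynomial.eval_C]
      calc β^n * (z^s * (R.coeff k * z^k))
          = R.coeff k * (β^(n-s-k) * (β*z)^(s+k)) := by
            rw [hsplit, mul_pow, ← pow_add]; ring
        _ = R.coeff k * (β^(n-s-k) * ((1-u)^s * (1-u)^k)) := by
            rw [hβz, pow_add]
        _ = (1-u)^s * (R.coeff k * ((1-u)^k * β^(n-s-k))) := by ring
    rw [Polynomial.eval_mul, Polynomial.eval_mul, Polynomial.eval_C,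
      Polynomial.eval_finset_sum, Polynomial.eval_pow]
    simp only [Polynomial.eval_mul, Polynomial.eval_C, Polynomial.eval_pow,
      Polynomial.eval_X, Polynomial.eval_sub, Polynomial.eval_one]
    rw [← E1, E2]
  -- conclude divisibility
  have hdvdF : ((1:ℂ[X]) - X)^s ∣ Polynomial.C ((p:ℂ)^n) *
      (∑ j ∈ range (n+1), Polynomial.C (δ j) * X^j) := ⟨H, key⟩
  have hu : IsUnit (Polynomial.C ((p:ℂ)^n)) :=
    Polynomial.isUnit_C.mpr (isUnit_iff_ne_zero.mpr (pow_ne_zero n hpC))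
  exact (hu.dvd_mul_left).mp hdvdF

end PolyAux

/-- Delsarte: if `C` is a linear code over `Z_p` of minimum distance `d` and the
dual of `C` has `s` distinct nonzero weights with `2s-1 ≤ d ≤ 2s+1`, then the weight distribution
of a coset of `C` is determined by the minimum weight of the coset. -/
theorem stmt4 (p n : ℕ) (hp : p.Prime)
    (C : Submodule (ZMod p) (Fin n → ZMod p))
    (d s : ℕ)
    (hd : d = sInf {w : ℕ | ∃ c ∈ C, c ≠ 0 ∧ hammingNorm c = w})
    (hs : s = Nat.card {w : ℕ | w ≠ 0 ∧ ∃ c ∈ dualCode C, hammingNorm c = w})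
    (h1 : 2 * s - 1 ≤ d) (h2 : d ≤ 2 * s + 1)
    (x y : Fin n → ZMod p)
    (hmin : sInf {w : ℕ | ∃ c ∈ C, hammingNorm (x + c) = w}
          = sInf {w : ℕ | ∃ c ∈ C, hammingNorm (y + c) = w}) :
    ∀ w : ℕ, Nat.card {u : Fin n → ZMod p | (∃ c ∈ C, u = x + c) ∧ hammingNorm u = w}
           = Nat.card {u : Fin n → ZMod p | (∃ c ∈ C, u = y + c) ∧ hammingNorm u = w} := by
  haveI : NeZero p := ⟨hp.ne_zero⟩
  haveI : Fact p.Prime := ⟨hp⟩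
  -- the standard additive character
  obtain ⟨ζ, hζprim⟩ : ∃ ζ : ℂ, IsPrimitiveRoot ζ p := ⟨_, Complex.isPrimitiveRoot_exp p hp.ne_zero⟩
  set ψ : AddChar (ZMod p) ℂ := AddChar.zmodChar p hζprim.pow_eq_one with hψdef
  have hψ : ψ ≠ 0 := by
    rw [AddChar.ne_zero_iff]
    refine ⟨1, ?_⟩
    rw [hψdef, AddChar.zmodChar_apply, ZMod.val_one_eq_one_mod]
    rw [Nat.mod_eq_of_lt hp.one_lt, pow_one]
    exact hζprim.ne_one hp.one_lt
  -- cardinality as coefficients of coset weight enumerator polynomials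
  have hcard : ∀ (x' : Fin n → ZMod p) (w : ℕ),
      Nat.card {u : Fin n → ZMod p | (∃ c ∈ C, u = x' + c) ∧ hammingNorm u = w}
        = (Finset.univ.filter fun c : C => hammingNorm (x' + (c : Fin n → ZMod p)) = w).card := by
    intro x' w
    rw [← Fintype.card_subtype, ← Nat.card_eq_fintype_card]
    apply Nat.card_congr
    refine Equiv.symm ⟨fun c => ⟨x' + (c.1 : Fin n → ZMod p), ⟨⟨c.1, c.1.2, rfl⟩, c.2⟩⟩,
      fun u => ⟨⟨u.1 - x', ?_⟩, ?_⟩, fun c => ?_, fun u => ?_⟩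
    · obtain ⟨⟨c, hcC, hceq⟩, -⟩ := u.2
      rw [hceq]
      simpa using hcC
    · obtain ⟨⟨c, hcC, hceq⟩, hw⟩ := u.2
      simpa using hw
    · ext : 1
      simp
    · ext : 1
      simp
  -- uniqueness of light coset elements
  have huniq : ∀ (x' : Fin n → ZMod p) (c c' : C),
      hammingNorm (x' + (c : Fin n → ZMod p)) < s →
      hammingNorm (x' + (c' : Fin n → ZMod p)) < s → c = c' := by
    intro x' c c' hc hc'
    by_contra hne
    have hsub : (c : Fin n → ZMod p) - (c' : Fin n → ZMod p) ∈ C := C.sub_mem c.2 c'.2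
    have hsubne : (c : Fin n → ZMod p) - (c' : Fin n → ZMod p) ≠ 0 := by
      intro h
      exact hne (Subtype.coe_injective (by linear_combination (norm := abel) h))
    have hdle : d ≤ hammingNorm ((c : Fin n → ZMod p) - (c' : Fin n → ZMod p)) := by
      rw [hd]
      exact Nat.sInf_le ⟨_, hsub, hsubne, rfl⟩
    have htri : hammingNorm ((c : Fin n → ZMod p) - (c' : Fin n → ZMod p))
        ≤ hammingNorm (x' + (c : Fin n → ZMod p)) + hammingNorm (x' + (c' : Fin n → ZMod p)) := by
      have heq : (c : Fin n → ZMod p) - (c' : Fin n → ZMod p)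
          = (x' + (c : Fin n → ZMod p)) - (x' + (c' : Fin n → ZMod p)) := by abel
      rw [heq, sub_eq_neg_add, ← hammingDist_eq_hammingNorm, hammingDist_comm]
      calc hammingDist (x' + (c : Fin n → ZMod p)) (x' + (c' : Fin n → ZMod p))
          ≤ hammingDist (x' + (c : Fin n → ZMod p)) 0
            + hammingDist 0 (x' + (c' : Fin n → ZMod p)) := hammingDist_triangle _ _ _
        _ = hammingNorm (x' + (c : Fin n → ZMod p)) + hammingNorm (x' + (c' : Fin n → ZMod p)) := by
            rw [hammingDist_zero_right, hammingDist_comm, hammingDist_zero_right]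
    omega
  -- the common minimum weight
  set m : ℕ := sInf {w : ℕ | ∃ c ∈ C, hammingNorm (x + c) = w} with hmdef
  have hkey : ∀ (x' : Fin n → ZMod p),
      sInf {w : ℕ | ∃ c ∈ C, hammingNorm (x' + c) = w} = m →
      ∀ i, i < s → (Finset.univ.filter fun c : C => hammingNorm (x' + (c : Fin n → ZMod p)) = i).card
        = if i = m then 1 else 0 := by
    intro x' hm' i hi
    have hne : {w : ℕ | ∃ c ∈ C, hammingNorm (x' + c) = w}.Nonempty :=
      ⟨hammingNorm (x' + 0), 0, C.zero_mem, rfl⟩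
    have hmem := Nat.sInf_mem hne
    rw [hm'] at hmem
    obtain ⟨c0v, hc0C, hc0⟩ := hmem
    set c0 : C := ⟨c0v, hc0C⟩ with hc0def
    have hc0' : hammingNorm (x' + (c0 : Fin n → ZMod p)) = m := hc0
    by_cases him : i = m
    · subst him
      rw [if_pos rfl]
      rw [Finset.card_eq_one]
      refine ⟨c0, ?_⟩
      rw [Finset.eq_singleton_iff_unique_mem]
      constructor
      · simp only [Finset.mem_filter, Finset.mem_univ, true_and]
        exact hc0
      · intro c hc
        simp only [Finset.mem_filter, Finset.mem_univ, true_and] at hc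
        exact huniq x' c c0 (by omega) (by omega)
    · rw [if_neg him]
      rw [Finset.card_eq_zero]
      rw [Finset.filter_eq_empty_iff]
      intro c _
      intro hcw
      have hmle : m ≤ i := hm' ▸ Nat.sInf_le ⟨(c : Fin n → ZMod p), c.2, hcw⟩
      have : c = c0 := huniq x' c c0 (by omega) (by omega)
      rw [this, hc0'] at hcw
      exact him hcw.symm
  have part1x := hkey x rfl
  have part1y := hkey y hmin.symm
  -- coset weight enumerator polynomials
  set Px : Polynomial ℂ := ∑ c : C, (Polynomial.X)^(hammingNorm (x + (c : Fin n → ZMod p))) with hPx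
  set Py : Polynomial ℂ := ∑ c : C, (Polynomial.X)^(hammingNorm (y + (c : Fin n → ZMod p))) with hPy
  have hcoeff : ∀ (x' : Fin n → ZMod p) (w : ℕ),
      (∑ c : C, (Polynomial.X : Polynomial ℂ)^(hammingNorm (x' + (c : Fin n → ZMod p)))).coeff w
        = ((Finset.univ.filter fun c : C => hammingNorm (x' + (c : Fin n → ZMod p)) = w).card : ℂ) := by
    intro x' w
    rw [Polynomial.finset_sum_coeff]
    rw [Finset.sum_congr rfl (fun c _ => Polynomial.coeff_X_pow _ w)]
    rw [Finset.sum_boole]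
    have hfilt : (Finset.univ.filter fun c : C => w = hammingNorm (x' + (c : Fin n → ZMod p)))
        = (Finset.univ.filter fun c : C => hammingNorm (x' + (c : Fin n → ZMod p)) = w) := by
      ext c
      simp [eq_comm]
    rw [hfilt]
  -- the dual code finset and the delta coefficients
  set DF : Finset (Fin n → ZMod p) := (dualCode C : Set (Fin n → ZMod p)).toFinite.toFinset with hDF
  set δ : ℕ → ℂ := fun j => ∑ v ∈ DF.filter (fun v => hammingNorm v = j),
      (ψ (∑ j, v j * x j) - ψ (∑ j, v j * y j)) with hδ
  set Qp : Polynomial ℂ := ∑ j ∈ Finset.range (n+1),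
      Polynomial.C (δ j) * ((1 - Polynomial.X)^j
        * (1 + Polynomial.C ((p:ℂ)-1) * Polynomial.X)^(n-j)) with hQp
  -- the master polynomial identity
  have hMaster : Polynomial.C ((p:ℂ)^n) * (Px - Py) = Polynomial.C ((Nat.card C : ℂ)) * Qp := by
    apply Polynomial.funext
    intro z
    have hwtle : ∀ v ∈ DF, hammingNorm v ∈ Finset.range (n+1) := by
      intro v _
      rw [Finset.mem_range]
      have := hammingNorm_le_card_fintype (x := v)
      rw [Fintype.card_fin] at this
      omega
    have hevalP : ∀ (x' : Fin n → ZMod p),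
        Polynomial.eval z (∑ c : C, (Polynomial.X : Polynomial ℂ)^(hammingNorm (x' + (c : Fin n → ZMod p))))
          = ∑ c : C, z^(hammingNorm (x' + (c : Fin n → ZMod p))) := by
      intro x'
      rw [Polynomial.eval_finset_sum]
      exact Finset.sum_congr rfl fun c _ => by rw [Polynomial.eval_pow, Polynomial.eval_X]
    have hmx := DelsarteAux2b.master ψ C hψ x z
    have hmy := DelsarteAux2b.master ψ C hψ y z
    have hQeval : Polynomial.eval z Qp = ∑ j ∈ Finset.range (n+1),
        δ j * ((1-z)^j * (1 + ((p:ℂ)-1)*z)^(n-j)) := by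
      rw [hQp, Polynomial.eval_finset_sum]
      refine Finset.sum_congr rfl fun j _ => ?_
      simp [Polynomial.eval_mul, Polynomial.eval_pow]
    have hgroup : ∑ v ∈ DF, (ψ (∑ j, v j * x j) - ψ (∑ j, v j * y j))
          * ((1-z)^(hammingNorm v) * (1 + ((p:ℂ)-1)*z)^(n - hammingNorm v))
        = ∑ j ∈ Finset.range (n+1), δ j * ((1-z)^j * (1 + ((p:ℂ)-1)*z)^(n-j)) := by
      rw [← Finset.sum_fiberwise_of_maps_to hwtle]
      refine Finset.sum_congr rfl fun j _ => ?_
      have hstep : ∑ v ∈ DF.filter (fun v => hammingNorm v = j),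
          (ψ (∑ j, v j * x j) - ψ (∑ j, v j * y j))
            * ((1-z)^(hammingNorm v) * (1 + ((p:ℂ)-1)*z)^(n - hammingNorm v))
          = ∑ v ∈ DF.filter (fun v => hammingNorm v = j),
          (ψ (∑ j, v j * x j) - ψ (∑ j, v j * y j))
            * ((1-z)^j * (1 + ((p:ℂ)-1)*z)^(n - j)) := by
        refine Finset.sum_congr rfl fun v hv => ?_
        rw [(Finset.mem_filter.mp hv).2]
      rw [hstep]
      exact (Finset.sum_mul _ _ _).symm
    rw [Polynomial.eval_mul, Polynomial.eval_mul, Polynomial.eval_C, Polynomial.eval_C,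
      Polynomial.eval_sub, hPx, hPy, hevalP, hevalP, hQeval]
    rw [mul_sub, hmx, hmy, ← hgroup, ← mul_sub]
    congr 1
    rw [← Finset.sum_sub_distrib]
    refine Finset.sum_congr rfl fun v _ => ?_
    ring
  -- coefficients below s vanish
  have hQlow : ∀ i, i < s → Qp.coeff i = 0 := by
    intro i hi
    have hC0 : (Nat.card C : ℂ) ≠ 0 := by
      rw [Nat.card_eq_fintype_card]
      simp only [ne_eq, Nat.cast_eq_zero]
      exact Fintype.card_ne_zero
    have hcl : (Polynomial.C ((p:ℂ)^n) * (Px - Py)).coeff i = 0 := by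
      rw [Polynomial.coeff_C_mul, Polynomial.coeff_sub, hPx, hPy, hcoeff, hcoeff,
        part1x i hi, part1y i hi, sub_self, mul_zero]
    rw [hMaster, Polynomial.coeff_C_mul] at hcl
    exact (mul_eq_zero.mp hcl).resolve_left hC0
  have hXdvd : (Polynomial.X : Polynomial ℂ)^s ∣ Qp := by
    rw [Polynomial.X_pow_dvd_iff]
    exact hQlow
  -- the nonzero dual weights
  set WF : Finset ℕ := (Finset.range (n+1)).filter
      (fun j => j ≠ 0 ∧ ∃ v ∈ dualCode C, hammingNorm v = j) with hWF
  have hWFcard : WF.card = s := by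
    rw [hs]
    have hset : {w : ℕ | w ≠ 0 ∧ ∃ c ∈ dualCode C, hammingNorm c = w} = (WF : Set ℕ) := by
      ext w
      simp only [Set.mem_setOf_eq, hWF, Finset.coe_filter, Finset.mem_range]
      constructor
      · rintro ⟨hw0, c, hcC, hcw⟩
        refine ⟨?_, hw0, c, hcC, hcw⟩
        have := hammingNorm_le_card_fintype (x := c)
        rw [Fintype.card_fin] at this
        omega
      · rintro ⟨-, h⟩
        exact h
    rw [hset, Nat.card_coe_set_eq, Set.ncard_coe_finset]
  have hsn : s ≤ n := by
    have hsub : WF ⊆ (Finset.range (n+1)).erase 0 := by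
      intro j hj
      rw [hWF, Finset.mem_filter] at hj
      rw [Finset.mem_erase]
      exact ⟨hj.2.1, hj.1⟩
    have := Finset.card_le_card hsub
    rw [Finset.card_erase_of_mem (by simp), Finset.card_range] at this
    omega
  -- apply the substitution lemma
  have hFdvd := PolyAux.sub_lemma p n s hp.one_lt hsn δ hXdvd
  set Fp : Polynomial ℂ := ∑ j ∈ Finset.range (n+1), Polynomial.C (δ j) * Polynomial.X^j with hFp
  have hFcoeff : ∀ j, j ∈ Finset.range (n+1) → Fp.coeff j = δ j := by
    intro j hj
    rw [hFp, Polynomial.finset_sum_coeff]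
    rw [Finset.sum_congr rfl (fun k _ => by
      rw [Polynomial.coeff_C_mul, Polynomial.coeff_X_pow])]
    rw [Finset.sum_eq_single j]
    · rw [if_pos rfl, mul_one]
    · intro k _ hk
      rw [if_neg (fun h => hk h.symm), mul_zero]
    · intro h
      exact absurd hj h
  have hδ0 : δ 0 = 0 := by
    rw [hδ]
    simp only []
    have : DF.filter (fun v => hammingNorm v = 0) = {0} := by
      ext v
      simp only [Finset.mem_filter, Finset.mem_singleton, hDF, Set.Finite.mem_toFinset,
        SetLike.mem_coe, hammingNorm_eq_zero]
      constructor
      · rintro ⟨-, h⟩; exact h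
      · rintro rfl; exact ⟨(dualCode C).zero_mem, rfl⟩
    rw [this, Finset.sum_singleton]
    simp
  have hsupp : Fp.support ⊆ WF := by
    intro j hj
    rw [Polynomial.mem_support_iff] at hj
    have hjn : j ∈ Finset.range (n+1) := by
      by_contra hjn
      apply hj
      rw [hFp, Polynomial.finset_sum_coeff]
      apply Finset.sum_eq_zero
      intro k hk
      rw [Polynomial.coeff_C_mul, Polynomial.coeff_X_pow, if_neg, mul_zero]
      rintro rfl
      exact hjn hk
    have hδj : δ j ≠ 0 := by rw [← hFcoeff j hjn]; exact hj
    rw [hWF, Finset.mem_filter]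
    refine ⟨hjn, ?_, ?_⟩
    · rintro rfl
      exact hδj hδ0
    · by_contra hno
      push_neg at hno
      apply hδj
      rw [hδ]
      simp only []
      apply Finset.sum_eq_zero
      intro v hv
      rw [Finset.mem_filter, hDF, Set.Finite.mem_toFinset, SetLike.mem_coe] at hv
      exact absurd hv.2 (fun h => (hno v hv.1) h)
  have hFp0 : Fp = 0 := by
    apply PolyAux.eq_zero_of_card_support_le s Fp
    · calc Fp.support.card ≤ WF.card := Finset.card_le_card hsupp
        _ = s := hWFcard
    · exact hFdvd
  have hδall : ∀ j ∈ Finset.range (n+1), δ j = 0 := by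
    intro j hj
    rw [← hFcoeff j hj, hFp0]
    simp
  have hQp0 : Qp = 0 := by
    rw [hQp]
    apply Finset.sum_eq_zero
    intro j hj
    rw [hδall j hj]
    simp
  have hPxy : Px = Py := by
    have : Polynomial.C ((p:ℂ)^n) * (Px - Py) = 0 := by
      rw [hMaster, hQp0, mul_zero]
    have hC : (Polynomial.C ((p:ℂ)^n) : Polynomial ℂ) ≠ 0 := by
      rw [ne_eq, Polynomial.C_eq_zero]
      exact pow_ne_zero n (by simp only [ne_eq, Nat.cast_eq_zero]; exact hp.ne_zero)
    have := (mul_eq_zero.mp this).resolve_left hC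
    linear_combination this
  -- conclude
  intro w
  rw [hcard x w, hcard y w]
  have : (Px.coeff w : ℂ) = Py.coeff w := by rw [hPxy]
  rw [hPx, hPy, hcoeff, hcoeff] at this
  exact_mod_cast this
end

section
/- Let C be a linear code over Z_p and let s be the number of distinct nonzero Hamming weights of its dual C^⊥. Then every coset of C contains a vector of Hamming weight at most s. -/
open Polynomial

noncomputable def qpoly (p n w : ℕ) : ℂ[X] := (1 - X)^w * (1 + C ((p:ℂ)-1) * X)^(n - w)

lemma qpoly_deriv (p n w : ℕ) (h : w ≤ n) :
    (1 - X) * (1 + C ((p:ℂ)-1) * X) * derivative (qpoly p n w)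
      = (C (((p:ℂ)-1)*n - p*w) - C (((p:ℂ)-1)*n) * X) * qpoly p n w := by
  have hpred : ∀ (P : ℂ[X]) (k : ℕ), (k : ℂ[X]) * P^(k-1) * P = (k : ℂ[X]) * P^k := by
    intro P k
    cases k with
    | zero => simp
    | succ k => simp [pow_succ]; ring
  have hA : derivative (1 - X : ℂ[X]) = -1 := by simp
  have hB : derivative (1 + C ((p:ℂ)-1) * X) = C ((p:ℂ)-1) := by simp
  set A : ℂ[X] := 1 - X with hAdef
  set B : ℂ[X] := 1 + C ((p:ℂ)-1) * X with hBdef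
  rw [qpoly, derivative_mul, derivative_pow, derivative_pow, hA, hB]
  calc A * B * ((w : ℂ[X]) * A ^ (w-1) * (-1) * B^(n-w) + A^w * (((n-w : ℕ) : ℂ[X]) * B^(n-w-1) * C ((p:ℂ)-1)))
      = ((w : ℂ[X]) * A^(w-1) * A) * (-(B * B^(n-w))) + (((n-w : ℕ) : ℂ[X]) * B^(n-w-1) * B) * (C ((p:ℂ)-1) * (A * A^w)) := by ring
    _ = ((w : ℂ[X]) * A^w) * (-(B * B^(n-w))) + (((n-w : ℕ) : ℂ[X]) * B^(n-w)) * (C ((p:ℂ)-1) * (A * A^w)) := by rw [hpred, hpred]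
    _ = (-(w : ℂ[X]) * B + C ((p:ℂ)-1) * ((n-w : ℕ) : ℂ[X]) * A) * (A^w * B^(n-w)) := by ring
    _ = (C (((p:ℂ)-1)*n - p*w) - C (((p:ℂ)-1)*n) * X) * (A^w * B^(n-w)) := by
        congr 1
        have hw : (w : ℂ[X]) = C (w : ℂ) := by simp
        have hm : ((n - w : ℕ) : ℂ[X]) = C ((n:ℂ) - w) := by
          rw [← C_eq_natCast]
          congr 1
          push_cast [Nat.cast_sub h]
          ring
        rw [hw, hm, hAdef, hBdef]
        simp only [C_sub, C_mul, C_add, C_1]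
        ring
    _ = (C (((p:ℂ)-1)*n - p*w) - C (((p:ℂ)-1)*n) * X) * qpoly p n w := rfl

lemma qpoly_key (p n : ℕ) (hp : (p:ℂ) ≠ 0) :
    ∀ (m : ℕ) (W : Finset ℕ) (β : ℕ → ℂ), W.card = m → W.Nonempty →
      (∀ w ∈ W, w ≤ n) → (∀ w ∈ W, β w ≠ 0) →
      ¬ ((X : ℂ[X])^m ∣ ∑ w ∈ W, C (β w) * qpoly p n w) := by
  intro m
  induction m with
  | zero =>
    intro W β hcard hne _ _ _
    rw [Finset.card_eq_zero] at hcard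
    subst hcard
    exact Finset.not_nonempty_empty hne
  | succ m ih =>
    intro W β hcard hne hle hβ hdvd
    rcases Nat.eq_zero_or_pos m with hm | hm
    · subst hm
      obtain ⟨a, ha⟩ := Finset.card_eq_one.mp hcard
      subst ha
      rw [Finset.sum_singleton, pow_one] at hdvd
      have h0 : Polynomial.eval 0 (C (β a) * qpoly p n a) = 0 := by
        obtain ⟨H, hH⟩ := hdvd; rw [hH]; simp
      rw [eval_mul, eval_C] at h0
      have h1 : Polynomial.eval 0 (qpoly p n a) = 1 := by simp [qpoly]
      rw [h1, mul_one] at h0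
      exact hβ a (Finset.mem_singleton_self a) h0
    · obtain ⟨w₀, hw₀⟩ := hne
      set F : ℂ[X] := ∑ w ∈ W, C (β w) * qpoly p n w with hF
      set G : ℂ[X] := (1 - X) * (1 + C ((p:ℂ)-1) * X) * derivative F
          - (C (((p:ℂ)-1)*n - p*w₀) - C (((p:ℂ)-1)*n) * X) * F with hG
      have hterm : ∀ w ∈ W,
          (1 - X) * (1 + C ((p:ℂ)-1) * X) * derivative (C (β w) * qpoly p n w)
            - (C (((p:ℂ)-1)*n - p*w₀) - C (((p:ℂ)-1)*n) * X) * (C (β w) * qpoly p n w)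
          = C ((p:ℂ) * ((w₀:ℂ) - w) * β w) * qpoly p n w := by
        intro w hw
        have hdC : derivative (C (β w) * qpoly p n w) = C (β w) * derivative (qpoly p n w) := by
          rw [derivative_mul, derivative_C, zero_mul, zero_add]
        rw [hdC]
        have step : (1 - X) * (1 + C ((p:ℂ)-1) * X) * (C (β w) * derivative (qpoly p n w))
            = C (β w) * ((C (((p:ℂ)-1)*n - p*w) - C (((p:ℂ)-1)*n) * X) * qpoly p n w) := by
          rw [← qpoly_deriv p n w (hle w hw)]; ring
        rw [step]
        have hC : C (((p:ℂ)-1)*n - p*w) - C (((p:ℂ)-1)*n - p*w₀)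
            = C ((p:ℂ) * ((w₀:ℂ) - w)) := by
          rw [← C_sub]; congr 1; ring
        calc C (β w) * ((C (((p:ℂ)-1)*n - p*w) - C (((p:ℂ)-1)*n) * X) * qpoly p n w)
              - (C (((p:ℂ)-1)*n - p*w₀) - C (((p:ℂ)-1)*n) * X) * (C (β w) * qpoly p n w)
            = (C (((p:ℂ)-1)*n - p*w) - C (((p:ℂ)-1)*n - p*w₀)) * (C (β w) * qpoly p n w) := by ring
          _ = C ((p:ℂ) * ((w₀:ℂ) - w)) * (C (β w) * qpoly p n w) := by rw [hC]
          _ = C ((p:ℂ) * ((w₀:ℂ) - w) * β w) * qpoly p n w := by simp only [C_mul]; ring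
      have hGsum : G = ∑ w ∈ W.erase w₀, C ((p:ℂ) * ((w₀:ℂ) - w) * β w) * qpoly p n w := by
        have : G = ∑ w ∈ W, C ((p:ℂ) * ((w₀:ℂ) - w) * β w) * qpoly p n w := by
          rw [hG, hF, derivative_sum, Finset.mul_sum, Finset.mul_sum, ← Finset.sum_sub_distrib]
          exact Finset.sum_congr rfl hterm
        rw [this, ← Finset.add_sum_erase _ _ hw₀]
        simp
      have hGdvd : (X : ℂ[X])^m ∣ G := by
        obtain ⟨H, hH⟩ := hdvd
        have hd1 : (X : ℂ[X])^m ∣ derivative F := by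
          rw [hH, derivative_mul, derivative_X_pow]
          apply dvd_add
          · apply Dvd.dvd.mul_right
            apply Dvd.dvd.mul_left
            exact pow_dvd_pow X (by omega)
          · exact Dvd.dvd.mul_right (pow_dvd_pow X (by omega)) _
        rw [hG]
        apply dvd_sub
        · exact Dvd.dvd.mul_left hd1 _
        · rw [hH]
          exact Dvd.dvd.mul_left (Dvd.dvd.mul_right (pow_dvd_pow X (by omega)) _) _
      rw [hGsum] at hGdvd
      refine ih (W.erase w₀) _ ?_ ?_ ?_ ?_ hGdvd
      · rw [Finset.card_erase_of_mem hw₀, hcard]; omega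
      · rw [← Finset.card_pos, Finset.card_erase_of_mem hw₀, hcard]; omega
      · exact fun w hw => hle w (Finset.mem_of_mem_erase hw)
      · intro w hw
        apply mul_ne_zero (mul_ne_zero hp _) (hβ w (Finset.mem_of_mem_erase hw))
        rw [sub_ne_zero]
        exact fun h => (Finset.ne_of_mem_erase hw) (Nat.cast_injective h).symm

lemma mem_dualCode {R : Type*} [CommRing R] {n : ℕ} (C : Submodule R (Fin n → R))
    (x : Fin n → R) : x ∈ dualCode C ↔ ∀ c ∈ C, ∑ j, x j * c j = 0 := Iff.rfl

lemma dualCode_dualCode {K : Type*} [Field K] {n : ℕ} (C : Submodule K (Fin n → K)) :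
    dualCode (dualCode C) = C := by
  let B : LinearMap.BilinForm K (Fin n → K) :=
    LinearMap.mk₂ K (fun x y => ∑ j, x j * y j)
      (by intro x x' y; simp [add_mul, Finset.sum_add_distrib])
      (by intro a x y; simp [Finset.mul_sum, mul_assoc])
      (by intro x y y'; simp [mul_add, Finset.sum_add_distrib])
      (by intro a x y; simp [Finset.mul_sum]; congr 1; ext j; ring)
  have hBapp : ∀ x y, B x y = ∑ j, x j * y j := fun _ _ => rfl
  have horth : ∀ W : Submodule K (Fin n → K), dualCode W = B.orthogonal W := by
    intro W
    ext x
    rw [mem_dualCode, LinearMap.BilinForm.mem_orthogonal_iff]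
    constructor
    · intro h c hc
      rw [hBapp]
      rw [← h c hc]
      exact Finset.sum_congr rfl fun j _ => mul_comm _ _
    · intro h c hc
      rw [← h c hc, hBapp]
      exact Finset.sum_congr rfl fun j _ => mul_comm _ _
  have hnd : B.Nondegenerate := by
    suffices hsl : B.SeparatingLeft from ⟨hsl, fun y hy => hsl y fun x => by
      have := hy x; rw [hBapp] at this ⊢; rw [← this]; exact Finset.sum_congr rfl fun j _ => mul_comm _ _⟩
    intro x hx
    funext j
    have := hx (Pi.single j 1)
    rw [hBapp] at this
    simpa [Pi.single_apply, Finset.sum_ite_eq'] using this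
  have hrefl : B.IsRefl := by
    intro x y h
    rw [hBapp] at h ⊢
    rw [← h]
    exact Finset.sum_congr rfl fun j _ => mul_comm _ _
  rw [horth, horth, LinearMap.BilinForm.orthogonal_orthogonal hnd hrefl]

lemma char_sum_submodule {p n : ℕ} [Fact p.Prime] (ψ : AddChar (ZMod p) ℂ)
    (hne1 : ∀ a : ZMod p, a ≠ 0 → ψ a ≠ 1)
    (D : Submodule (ZMod p) (Fin n → ZMod p)) [Fintype D] (u : Fin n → ZMod p)
    [Decidable (∀ c ∈ D, ∑ j, u j * c j = 0)] :
    ∑ c : D, ψ (∑ j, u j * (c : Fin n → ZMod p) j)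
      = if (∀ c ∈ D, ∑ j, u j * c j = 0) then (Fintype.card D : ℂ) else 0 := by
  split_ifs with h
  · rw [Finset.sum_congr rfl (fun c _ => by rw [h c c.2, AddChar.map_zero_eq_one])]
    simp
  · push_neg at h
    obtain ⟨c₀, hc₀D, hc₀⟩ := h
    set S := ∑ c : D, ψ (∑ j, u j * (c : Fin n → ZMod p) j) with hS
    have hbij : S = ∑ c : D, ψ (∑ j, u j * ((c + ⟨c₀, hc₀D⟩ : D) : Fin n → ZMod p) j) := by
      rw [hS]
      exact (Fintype.sum_bijective (· + (⟨c₀, hc₀D⟩ : D))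
        (Equiv.addRight (⟨c₀, hc₀D⟩ : D)).bijective _ _ (fun c => rfl)).symm
    have hsplit : ∀ c : D, ψ (∑ j, u j * ((c + ⟨c₀, hc₀D⟩ : D) : Fin n → ZMod p) j)
        = ψ (∑ j, u j * c₀ j) * ψ (∑ j, u j * (c : Fin n → ZMod p) j) := by
      intro c
      rw [← AddChar.map_add_eq_mul]
      congr 1
      rw [← Finset.sum_add_distrib]
      refine Finset.sum_congr rfl fun j _ => ?_
      rw [Submodule.coe_add]
      simp [mul_add, add_comm]
    rw [Finset.sum_congr rfl (fun c _ => hsplit c), ← Finset.mul_sum, ← hS] at hbij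
    have : (ψ (∑ j, u j * c₀ j) - 1) * S = 0 := by
      rw [sub_mul, one_mul, ← hbij, sub_self]
    rcases mul_eq_zero.mp this with h' | h'
    · exact absurd (by linear_combination h' : ψ (∑ j, u j * c₀ j) = 1) (hne1 _ hc₀)
    · exact h'

lemma char_prod_formula {p n : ℕ} [Fact p.Prime] (ψ : AddChar (ZMod p) ℂ)
    (hsum : ∀ t : ZMod p, t ≠ 0 → ∑ a : ZMod p, ψ (t * a) = 0)
    (c : Fin n → ZMod p) :
    ∑ z : Fin n → ZMod p, (X : ℂ[X])^(hammingNorm z) * C (ψ (∑ j, c j * z j))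
      = qpoly p n (hammingNorm c) := by
  have hp2 : 2 ≤ p := (Fact.out : p.Prime).two_le
  have hψsum : ∀ (f : Fin n → ZMod p), ψ (∑ j, f j) = ∏ j, ψ (f j) := by
    intro f
    classical
    induction (Finset.univ : Finset (Fin n)) using Finset.cons_induction with
    | empty => simp
    | cons a s ha ih => rw [Finset.sum_cons, Finset.prod_cons, AddChar.map_add_eq_mul, ih]
  have hterm : ∀ z : Fin n → ZMod p,
      (X : ℂ[X])^(hammingNorm z) * C (ψ (∑ j, c j * z j))
        = ∏ j, ((if z j ≠ 0 then (X:ℂ[X]) else 1) * C (ψ (c j * z j))) := by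
    intro z
    rw [Finset.prod_mul_distrib]
    congr 1
    · rw [Finset.prod_ite, Finset.prod_const, Finset.prod_const, one_pow, mul_one]
      congr 1
    · rw [hψsum, map_prod]
  rw [Finset.sum_congr rfl (fun z _ => hterm z),
    ← Fintype.prod_sum (fun (j : Fin n) (a : ZMod p) =>
      (if a ≠ 0 then (X:ℂ[X]) else 1) * C (ψ (c j * a)))]
  have hcoord : ∀ t : ZMod p,
      ∑ a : ZMod p, (if a ≠ 0 then (X:ℂ[X]) else 1) * C (ψ (t * a))
        = if t = 0 then 1 + C ((p:ℂ)-1) * X else 1 - X := by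
    intro t
    rw [← Finset.add_sum_erase _ _ (Finset.mem_univ (0 : ZMod p))]
    have h0 : (if (0:ZMod p) ≠ 0 then (X:ℂ[X]) else 1) * C (ψ (t * 0)) = 1 := by
      simp
    rw [h0]
    have herase : ∀ a ∈ Finset.univ.erase (0 : ZMod p),
        (if a ≠ 0 then (X:ℂ[X]) else 1) * C (ψ (t * a)) = X * C (ψ (t * a)) := by
      intro a ha
      rw [if_pos (Finset.ne_of_mem_erase ha)]
    rw [Finset.sum_congr rfl herase]
    split_ifs with ht
    · subst ht
      have : ∀ a ∈ Finset.univ.erase (0 : ZMod p), (X:ℂ[X]) * C (ψ (0 * a)) = X := by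
        intro a _; simp
      rw [Finset.sum_congr rfl this, Finset.sum_const, Finset.card_erase_of_mem (Finset.mem_univ _),
        Finset.card_univ, ZMod.card]
      rw [nsmul_eq_mul]
      congr 1
      rw [← C_eq_natCast, Nat.cast_sub (by omega), Nat.cast_one]
    · have hsum' : ∑ a ∈ Finset.univ.erase (0 : ZMod p), ψ (t * a) = -1 := by
        have h := hsum t ht
        rw [← Finset.add_sum_erase _ _ (Finset.mem_univ (0 : ZMod p)), mul_zero,
          AddChar.map_zero_eq_one] at h
        linear_combination h
      rw [← Finset.mul_sum, ← map_sum, hsum']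
      have : (C (-1:ℂ) : ℂ[X]) = -1 := by simp
      rw [this]
      ring
  rw [Finset.prod_congr rfl (fun j _ => hcoord (c j)), Finset.prod_ite, Finset.prod_const,
    Finset.prod_const]
  have hcnt : (Finset.univ.filter (fun j => ¬ c j = 0)).card = hammingNorm c := by
    simp [hammingNorm]
  have hcnt2 : (Finset.univ.filter (fun j => c j = 0)).card = n - hammingNorm c := by
    have := Finset.card_filter_add_card_filter_not (s := (Finset.univ : Finset (Fin n)))
      (p := fun j => c j = 0)
    simp only [Finset.card_univ, Fintype.card_fin] at this
    omega
  rw [hcnt, hcnt2, qpoly, mul_comm]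


/-- Delsarte's covering radius bound: every coset of a linear code `C ⊆ Z_p^n`
contains a vector of Hamming weight at most `s`, the number of distinct nonzero weights of the
dual code. -/
theorem stmt5 (p n : ℕ) (hp : p.Prime)
    (C : Submodule (ZMod p) (Fin n → ZMod p))
    (s : ℕ)
    (hs : s = Nat.card {w : ℕ | w ≠ 0 ∧ ∃ c ∈ dualCode C, hammingNorm c = w}) :
    ∀ x : Fin n → ZMod p, ∃ c ∈ C, hammingNorm (x + c) ≤ s := by
  intro x
  by_contra hcon
  push_neg at hcon
  haveI : Fact p.Prime := ⟨hp⟩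
  haveI : NeZero p := ⟨hp.ne_zero⟩
  classical
  set D := dualCode C with hD
  haveI : Fintype D := Fintype.ofFinite D
  have hdd : dualCode D = C := dualCode_dualCode C
  -- the additive character
  have hprim : IsPrimitiveRoot (Complex.exp (2 * Real.pi * Complex.I / p)) p :=
    Complex.isPrimitiveRoot_exp p hp.ne_zero
  set ψ : AddChar (ZMod p) ℂ := AddChar.zmodChar p hprim.pow_eq_one with hψdef
  have hne1 : ∀ a : ZMod p, a ≠ 0 → ψ a ≠ 1 := by
    intro a ha h1
    rw [hψdef, AddChar.zmodChar_apply] at h1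
    have hdvd := (hprim.pow_eq_one_iff_dvd a.val).mp h1
    have hval : a.val < p := ZMod.val_lt a
    have : a.val = 0 := Nat.eq_zero_of_dvd_of_lt hdvd hval
    exact ha ((ZMod.val_eq_zero a).mp this)
  have hψne : ψ ≠ 1 := by
    rw [AddChar.ne_one_iff]
    exact ⟨1, hne1 1 one_ne_zero⟩
  have hsum0 : ∑ a : ZMod p, ψ a = 0 := AddChar.sum_eq_zero_of_ne_one hψne
  have hsum : ∀ t : ZMod p, t ≠ 0 → ∑ a : ZMod p, ψ (t * a) = 0 := by
    intro t ht
    exact (Fintype.sum_bijective (t * ·) (mulLeft_bijective₀ t ht)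
      (fun a => ψ (t * a)) ψ (fun a => rfl)).trans hsum0
  -- the main generating-function identity
  set LHS : ℂ[X] := ∑ c : D, Polynomial.C (ψ (∑ j, x j * (c : Fin n → ZMod p) j))
      * qpoly p n (hammingNorm (c : Fin n → ZMod p)) with hLHS
  have way2 : LHS = ∑ z : Fin n → ZMod p, (X:ℂ[X])^(hammingNorm z)
      * Polynomial.C (if x + z ∈ C then (Fintype.card D : ℂ) else 0) := by
    have step1 : LHS = ∑ c : D, ∑ z : Fin n → ZMod p,
        (X:ℂ[X])^(hammingNorm z) * Polynomial.C (ψ (∑ j, x j * (c : Fin n → ZMod p) j)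
          * ψ (∑ j, (c : Fin n → ZMod p) j * z j)) := by
      rw [hLHS]
      refine Finset.sum_congr rfl fun c _ => ?_
      rw [← char_prod_formula ψ hsum (c : Fin n → ZMod p), Finset.mul_sum]
      refine Finset.sum_congr rfl fun z _ => ?_
      rw [Polynomial.C_mul]; ring
    rw [step1, Finset.sum_comm]
    refine Finset.sum_congr rfl fun z _ => ?_
    rw [← Finset.mul_sum, ← map_sum]
    congr 1
    have hexp : ∀ c : D, ψ (∑ j, x j * (c : Fin n → ZMod p) j)
        * ψ (∑ j, (c : Fin n → ZMod p) j * z j)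
        = ψ (∑ j, (x + z) j * (c : Fin n → ZMod p) j) := by
      intro c
      rw [← AddChar.map_add_eq_mul]
      congr 1
      rw [← Finset.sum_add_distrib]
      exact Finset.sum_congr rfl fun j _ => by simp [add_mul, mul_comm]
    rw [Finset.sum_congr rfl fun c _ => hexp c,
      char_sum_submodule ψ hne1 D (x + z)]
    have hcond : (∀ c ∈ D, ∑ j, (x + z) j * c j = 0) ↔ x + z ∈ C := by
      rw [← hdd]
      exact (mem_dualCode D (x + z)).symm
    exact congrArg Polynomial.C (if_congr hcond rfl rfl)
  have hdvdLHS : (X : ℂ[X])^(s+1) ∣ LHS := by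
    rw [way2]
    refine Finset.dvd_sum fun z _ => ?_
    by_cases hz : x + z ∈ C
    · refine Dvd.dvd.mul_right (pow_dvd_pow X ?_) _
      have hnegz : -(x + z) ∈ C := neg_mem hz
      have := hcon (-(x + z)) hnegz
      have hsimp : x + -(x + z) = -z := by ring
      rw [hsimp] at this
      have hneg : hammingNorm (-z) = hammingNorm z := by
        simp [hammingNorm, neg_eq_zero]
      omega
    · rw [if_neg hz]
      simp
  -- group by weights
  set Wfin : Finset ℕ :=
    Finset.image (fun c : D => hammingNorm (c : Fin n → ZMod p)) Finset.univ with hWfin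
  set βfun : ℕ → ℂ := fun w =>
    ∑ c ∈ Finset.univ.filter (fun c : D => hammingNorm (c : Fin n → ZMod p) = w),
      ψ (∑ j, x j * (c : Fin n → ZMod p) j) with hβfun
  have hgroup : LHS = ∑ w ∈ Wfin, Polynomial.C (βfun w) * qpoly p n w := by
    rw [hLHS, ← Finset.sum_fiberwise_of_maps_to (t := Wfin)
      (g := fun c : D => hammingNorm (c : Fin n → ZMod p))
      (fun c _ => Finset.mem_image_of_mem _ (Finset.mem_univ c))
      (fun c : D => Polynomial.C (ψ (∑ j, x j * (c : Fin n → ZMod p) j))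
        * qpoly p n (hammingNorm (c : Fin n → ZMod p)))]
    refine Finset.sum_congr rfl fun w hw => ?_
    simp only [hβfun]
    rw [map_sum, Finset.sum_mul]
    refine Finset.sum_congr rfl fun c hc => ?_
    rw [(Finset.mem_filter.mp hc).2]
  have hβ0 : βfun 0 = 1 := by
    simp only [hβfun]
    have hfilter : Finset.univ.filter (fun c : D => hammingNorm (c : Fin n → ZMod p) = 0)
        = {(0 : D)} := by
      ext c
      simp only [Finset.mem_filter, Finset.mem_univ, true_and, Finset.mem_singleton]
      rw [hammingNorm_eq_zero]
      exact ⟨fun h => Subtype.ext h, fun h => by rw [h]; rfl⟩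
    rw [hfilter, Finset.sum_singleton]
    simp
  have h0mem : (0 : ℕ) ∈ Wfin := by
    rw [hWfin]
    exact Finset.mem_image.mpr ⟨0, Finset.mem_univ _, by simp⟩
  have hWcard : (Wfin.erase 0).card = s := by
    have hsetEq : {w : ℕ | w ≠ 0 ∧ ∃ c ∈ D, hammingNorm c = w} = ↑(Wfin.erase 0) := by
      ext w
      simp only [Set.mem_setOf_eq, Finset.coe_erase, Set.mem_diff, Finset.mem_coe, hWfin,
        Finset.mem_image, Finset.mem_univ, true_and, Set.mem_singleton_iff]
      constructor
      · rintro ⟨hw, c, hcD, hcw⟩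
        exact ⟨⟨⟨c, hcD⟩, hcw⟩, hw⟩
      · rintro ⟨⟨c, hcw⟩, hw⟩
        exact ⟨hw, c, c.2, hcw⟩
    rw [hs, hsetEq, Nat.card_coe_set_eq, Set.ncard_coe_finset]
  set Wsup : Finset ℕ := Wfin.filter (fun w => βfun w ≠ 0) with hWsup
  have hsupLHS : LHS = ∑ w ∈ Wsup, Polynomial.C (βfun w) * qpoly p n w := by
    rw [hgroup, hWsup, Finset.sum_filter_of_ne]
    intro w _ hne h0
    apply hne
    rw [h0]
    simp
  have h0sup : (0 : ℕ) ∈ Wsup := by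
    rw [hWsup, Finset.mem_filter]
    exact ⟨h0mem, by rw [hβ0]; exact one_ne_zero⟩
  have hsupcard : Wsup.card ≤ s + 1 := by
    have h1 : Wsup.card ≤ Wfin.card := Finset.card_filter_le _ _
    have h2 : Wfin.card = s + 1 := by
      have := Finset.card_erase_of_mem h0mem
      have hpos : 0 < Wfin.card := Finset.card_pos.mpr ⟨0, h0mem⟩
      omega
    omega
  have hlen : ∀ w ∈ Wsup, w ≤ n := by
    intro w hw
    have := (Finset.mem_filter.mp hw).1
    rw [hWfin] at this
    obtain ⟨c, _, rfl⟩ := Finset.mem_image.mp this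
    exact le_trans hammingNorm_le_card_fintype (by simp)
  refine qpoly_key p n (Nat.cast_ne_zero.mpr hp.ne_zero) Wsup.card Wsup βfun rfl
    ⟨0, h0sup⟩ hlen (fun w hw => (Finset.mem_filter.mp hw).2) ?_
  rw [← hsupLHS]
  exact dvd_trans (pow_dvd_pow X hsupcard) hdvdLHS
end
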